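/- Let G be a simple quadrangulation of S² with minimum degree 3. Then G is 3-edge-connected. -/

import Mathlib

/-- The setoid on darts whose classes are the cycles (orbits) of a permutation. -/
def cycleSetoid {D : Type} (f : Equiv.Perm D) : Setoid D :=
  ⟨f.SameCycle, ⟨fun x => Equiv.Perm.SameCycle.refl f x,
    fun h => h.symm, fun h h' => h.trans h'⟩⟩

/-- Number of cycles (orbits) of a permutation. -/
noncomputable def orbitCount {D : Type} (f : Equiv.Perm D) : ℕ :=
  Nat.card (Quotient (cycleSetoid f))

/-- Size of the orbit of `d` under `f` (degree of the corresponding vertex/face). -/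
noncomputable def ptDeg {D : Type} (f : Equiv.Perm D) (d : D) : ℕ :=
  Nat.card {x : D // f.SameCycle d x}

/-- A connected combinatorial map (cellular embedded graph) on the sphere `S²`:
darts `D`, rotation `σ` (cyclic order of darts around each vertex), edge
involution `α` (fixed-point-free); vertices are the `σ`-orbits, edges the
`α`-orbits, faces the `σα`-orbits.  The Euler relation `V + F = E + 2`
characterizes cellular embeddings into the sphere. -/
structure CombMapS2 where
  D : Type
  fin : Fintype D
  σ : Equiv.Perm D
  α : Equiv.Perm D
  α_invol : ∀ d, α (α d) = d
  α_fpf : ∀ d, α d ≠ d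
  connected : ∀ d d' : D, ∃ g ∈ Subgroup.closure ({σ, α} : Set (Equiv.Perm D)), g d = d'
  euler : orbitCount σ + orbitCount (σ * α) = orbitCount α + 2

/-- The embedded graph is simple: no loops (the two darts of an edge lie at
distinct vertices) and no parallel edges (two edges with the same pair of
endpoints coincide). -/
def CombMapS2.Simple (M : CombMapS2) : Prop :=
  (∀ d, ¬ M.σ.SameCycle d (M.α d)) ∧
  (∀ d d' : M.D, M.σ.SameCycle d d' → M.σ.SameCycle (M.α d) (M.α d') → M.α.SameCycle d d')

/-- Reachability between darts along the graph, allowed to traverse only edges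
none of whose darts lies in the removed set `R`. -/
def Reaches {D : Type} (σ α : Equiv.Perm D) (R : Set D) : D → D → Prop :=
  Relation.ReflTransGen fun a b => b = σ a ∨ (a ∉ R ∧ b = α a)

section auxSTMT16
variable {D : Type}

lemma zpowFix (g : Equiv.Perm D) (x : D) (h : g x = x) : ∀ i : ℤ, (g ^ i) x = x := by
  have hinv : g⁻¹ x = x := by
    conv_lhs => rw [← h]
    exact g.symm_apply_apply x
  intro i
  induction i using Int.induction_on with
  | zero => simp
  | succ n ih => rw [zpow_add, zpow_one, Equiv.Perm.mul_apply, h, ih]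
  | pred n ih =>
      rw [sub_eq_add_neg, zpow_add, Equiv.Perm.mul_apply, zpow_neg_one, hinv]
      exact ih

lemma orbit_of_sq (f : Equiv.Perm D) (x y : D) (h2 : f (f x) = x)
    (h : f.SameCycle x y) : y = x ∨ y = f x := by
  obtain ⟨i, hi⟩ := h
  have hg : ((f ^ (2:ℤ))) x = x := by
    rw [show (2:ℤ) = 1 + 1 from rfl, zpow_add, zpow_one, Equiv.Perm.mul_apply, h2]
  have hq : ((f ^ (2 * (i / 2) : ℤ))) x = x := by
    rw [zpow_mul]
    exact zpowFix _ x hg (i / 2)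
  have hsplit : (f ^ i) x = (f ^ (i % 2)) x := by
    conv_lhs => rw [show i = i % 2 + 2 * (i / 2) by omega]
    rw [zpow_add, Equiv.Perm.mul_apply, hq]
  have hr : i % 2 = 0 ∨ i % 2 = 1 := by omega
  rcases hr with hr | hr
  · left; rw [← hi, hsplit, hr]; simp
  · right; rw [← hi, hsplit, hr]; simp

lemma ptDeg_le_two (f : Equiv.Perm D) (x : D) (h2 : f (f x) = x) : ptDeg f x ≤ 2 := by
  have hsub : {y : D | f.SameCycle x y} ⊆ {x, f x} := by
    intro y hy
    rcases orbit_of_sq f x y h2 hy with h | h <;> simp [h]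
  have h1 : ptDeg f x = ({y : D | f.SameCycle x y} : Set D).ncard :=
    (Nat.card_coe_set_eq _).symm
  have h2' : ({y : D | f.SameCycle x y} : Set D).ncard ≤ ({x, f x} : Set D).ncard :=
    Set.ncard_le_ncard hsub ((Set.finite_singleton _).insert _)
  have h3 : ({x, f x} : Set D).ncard ≤ 2 := by
    have := Set.ncard_insert_le x ({f x} : Set D)
    simpa [Set.ncard_singleton] using this
  omega

lemma pow_four (f : Equiv.Perm D) [Fintype D] [DecidableEq D] (d : D)
    (h : ptDeg f d = 4) : f (f (f (f d))) = d := by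
  by_cases hd : f d = d
  · have : {y : D | f.SameCycle d y} = {d} := by
      ext y; constructor
      · rintro ⟨i, hi⟩
        rw [← hi, zpowFix f d hd i]; rfl
      · intro hy
        simp only [Set.mem_singleton_iff] at hy
        subst hy
        exact ⟨0, by simp⟩
    have h1 : ptDeg f d = 1 := by
      rw [ptDeg, show Nat.card {x : D // f.SameCycle d x} = ({y : D | f.SameCycle d y} : Set D).ncard from Nat.card_coe_set_eq _, this, Set.ncard_singleton]
    omega
  · have hdsupp : d ∈ f.support := Equiv.Perm.mem_support.2 hd
    have hset : {y : D | f.SameCycle d y} = ↑(f.cycleOf d).support := by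
      ext y
      rw [Finset.mem_coe, Equiv.Perm.mem_support_cycleOf_iff]
      exact ⟨fun h => ⟨h, hdsupp⟩, fun h => h.1⟩
    have hcard : (f.cycleOf d).support.card = 4 := by
      rw [← h, ptDeg, show Nat.card {x : D // f.SameCycle d x} = ({y : D | f.SameCycle d y} : Set D).ncard from Nat.card_coe_set_eq _, hset, Set.ncard_coe_finset]
    have hc : (f.cycleOf d).IsCycle := Equiv.Perm.isCycle_cycleOf f hd
    have horder : orderOf (f.cycleOf d) = 4 := by rw [hc.orderOf, hcard]
    have hpow : (f.cycleOf d) ^ 4 = 1 := by rw [← horder]; exact pow_orderOf_eq_one _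
    have := Equiv.Perm.cycleOf_pow_apply_self f d 4
    rw [hpow] at this
    have h4 : (f ^ 4) d = d := this.symm
    have : (f ^ 4 : Equiv.Perm D) = f * f * f * f := by
      rw [show (4:ℕ) = 3+1 from rfl, pow_succ, show (3:ℕ) = 2+1 from rfl, pow_succ, pow_two]
    rw [this] at h4
    simpa [Equiv.Perm.mul_apply] using h4

lemma scz (σ : Equiv.Perm D) (y : D) (i j : ℤ) :
    σ.SameCycle ((σ ^ i) y) ((σ ^ j) y) :=
  ⟨j - i, by rw [← Equiv.Perm.mul_apply, ← zpow_add, sub_add_cancel]⟩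

lemma sc_one (σ : Equiv.Perm D) (y : D) : (σ ^ (1:ℤ)) y = σ y := by simp
lemma sc_neg_one (σ : Equiv.Perm D) (y : D) : (σ ^ (-1:ℤ)) y = σ⁻¹ y := by simp
lemma sc_two (σ : Equiv.Perm D) (y : D) : (σ ^ (2:ℤ)) y = σ (σ y) := by
  rw [show (2:ℤ) = 1+1 from rfl, zpow_add, zpow_one, Equiv.Perm.mul_apply]

end auxSTMT16

/-- a simple quadrangulation of `S²` with minimum degree 3 is
3-edge-connected: removing fewer than 3 edges (an α-invariant set of at most
4 darts) cannot disconnect it. -/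
theorem stmt16 (M : CombMapS2) (hs : M.Simple)
    (hq : ∀ d, ptDeg (M.σ * M.α) d = 4)
    (hmin : ∀ d, 3 ≤ ptDeg M.σ d) :
    ∀ R : Set M.D, (∀ d ∈ R, M.α d ∈ R) → Nat.card R ≤ 4 →
      ∀ d d' : M.D, Reaches M.σ M.α R d d' := by
  classical
  letI := M.fin
  obtain ⟨hs1, hs2⟩ := hs
  intro R hRinv hRcard d d'
  set S := M.σ with hSdef
  set a := M.α with hadef
  have hainv : ∀ x, a (a x) = x := M.α_invol
  have hF2 : ∀ x, S (S x) ≠ x := by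
    intro x hx
    have h1 := ptDeg_le_two S x hx
    have := hmin x; omega
  have hF1 : ∀ x, S x ≠ x := by
    intro x hx
    exact hF2 x (by rw [hx, hx])
  have htau4 : ∀ x, S (a (S (a (S (a (S (a x))))))) = x := by
    intro x
    have h := pow_four (M.σ * M.α) x (hq x)
    simpa [Equiv.Perm.mul_apply] using h
  set A : Set M.D := {x | Reaches M.σ M.α R d x} with hAdef
  suffices hAll : ∀ x, x ∈ A from hAll d'
  have hmemd : d ∈ A := Relation.ReflTransGen.refl
  have hstepS : ∀ x ∈ A, S x ∈ A := fun x hx => Relation.ReflTransGen.tail hx (Or.inl rfl)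
  have hstepA : ∀ x, x ∈ A → x ∉ R → a x ∈ A :=
    fun x hx hr => Relation.ReflTransGen.tail hx (Or.inr ⟨hr, rfl⟩)
  have hpowS : ∀ (k : ℕ), ∀ x ∈ A, (S ^ k) x ∈ A := by
    intro k
    induction k with
    | zero => intro x hx; simpa using hx
    | succ n ih =>
        intro x hx
        rw [pow_succ, Equiv.Perm.mul_apply]
        exact ih (S x) (hstepS x hx)
  have hstepSinv : ∀ x ∈ A, S⁻¹ x ∈ A := by
    intro x hx
    have hn : 0 < orderOf S := orderOf_pos S
    have h1 : (S ^ (orderOf S - 1)) x ∈ A := hpowS _ x hx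
    have he : S ^ (orderOf S - 1) = S⁻¹ := by
      apply eq_inv_of_mul_eq_one_left
      rw [← pow_succ, Nat.sub_add_cancel hn, pow_orderOf_eq_one]
    rwa [he] at h1
  have hSiff : ∀ x, S x ∈ A ↔ x ∈ A := by
    intro x
    constructor
    · intro h
      have := hstepSinv _ h
      simpa using this
    · exact hstepS x
  set C : Set M.D := {x | x ∈ A ∧ a x ∉ A} with hCdef
  have hCR : ∀ x ∈ C, x ∈ R := by
    intro x hx
    by_contra hr
    exact hx.2 (hstepA x hx.1 hr)
  have hCempty : C = ∅ := by
    by_contra hne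
    obtain ⟨d1, hd1⟩ := Set.nonempty_iff_ne_empty.2 hne
    -- cardinality bound
    have hcard2 : C.ncard ≤ 2 := by
      have hdisj : Disjoint C (a '' C) := by
        rw [Set.disjoint_left]
        rintro x hx ⟨y, hy, rfl⟩
        exact hy.2 hx.1
      have hsub : C ∪ a '' C ⊆ R := by
        rintro x (hx | ⟨y, hy, rfl⟩)
        · exact hCR x hx
        · exact hRinv y (hCR y hy)
      have h1 : (C ∪ a '' C).ncard ≤ R.ncard := Set.ncard_le_ncard hsub (Set.toFinite R)
      have h2 : (C ∪ a '' C).ncard = C.ncard + (a '' C).ncard :=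
        Set.ncard_union_eq hdisj (Set.toFinite _) (Set.toFinite _)
      have h3 : (a '' C).ncard = C.ncard := Set.ncard_image_of_injective _ a.injective
      have h4 : R.ncard ≤ 4 := by
        rw [← Nat.card_coe_set_eq]
        exact hRcard
      omega
    -- the walking lemma
    have walk : ∀ c ∈ C, ∃ e ∈ C,
        a e = S (a c) ∨
        (a (S (a c)) = S⁻¹ (a e) ∧ a (S e) = S⁻¹ c) ∨
        S e = c := by
      intro c hc
      have ht4 := htau4 c
      set t1 := S (a c) with ht1
      set t2 := S (a t1) with ht2
      set t3 := S (a t2) with ht3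
      have h1A : t1 ∉ A := fun h => hc.2 ((hSiff (a c)).1 h)
      by_cases h3 : t3 ∈ A
      · by_cases h2 : t2 ∈ A
        · have hat1 : a t1 ∈ A := (hSiff (a t1)).1 h2
          refine ⟨a t1, ⟨hat1, by rwa [hainv]⟩, Or.inl ?_⟩
          rw [hainv]
        · have hat2 : a t2 ∈ A := (hSiff (a t2)).1 h3
          refine ⟨a t2, ⟨hat2, by rwa [hainv]⟩, Or.inr (Or.inl ⟨?_, ?_⟩)⟩
          · rw [hainv, ht2]
            exact (S.symm_apply_apply (a t1)).symm
          · rw [← ht3, ← ht4]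
            exact (S.symm_apply_apply (a t3)).symm
      · have hat3 : a t3 ∈ A := by
          have h4' : S (a t3) ∈ A := by rw [ht4]; exact hc.1
          exact (hSiff (a t3)).1 h4'
        refine ⟨a t3, ⟨hat3, by rwa [hainv]⟩, Or.inr (Or.inr ?_)⟩
        exact ht4
    -- self contradiction (e = c)
    have selfC : ∀ c : M.D,
        ¬ (a c = S (a c) ∨ (a (S (a c)) = S⁻¹ (a c) ∧ a (S c) = S⁻¹ c) ∨ S c = c) := by
      intro c h
      rcases h with h | h | h
      · exact hF1 (a c) h.symm
      · apply hs1 (S (a c))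
        rw [h.1, ← sc_one, ← sc_neg_one]
        exact scz S (a c) 1 (-1)
      · exact hF1 c h
    obtain ⟨e1, he1, hrel1⟩ := walk d1 hd1
    by_cases he1d : e1 = d1
    · subst he1d
      exact selfC e1 hrel1
    · have hCpair : C = {d1, e1} := by
        have hsubp : ({d1, e1} : Set M.D) ⊆ C := by
          rintro x (rfl | rfl)
          · exact hd1
          · exact he1
        have hc2 : ({d1, e1} : Set M.D).ncard = 2 := Set.ncard_pair (Ne.symm he1d)
        refine (Set.eq_of_subset_of_ncard_le hsubp ?_ (Set.toFinite C)).symm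
        rw [hc2]
        exact hcard2
      obtain ⟨e2, he2, hrel2⟩ := walk e1 he1
      have he2' : e2 = d1 ∨ e2 = e1 := by
        have h := he2
        rw [hCpair] at h
        simpa using h
      rcases he2' with h21 | h21
      swap
      · rw [h21] at hrel2
        exact selfC e1 hrel2
      rw [h21] at hrel2
      -- now the 9 combinations, with d2 := e1
      rcases hrel1 with hY1 | hZ1 | hX1 <;> rcases hrel2 with hY2 | hZ2 | hX2
      · -- (Y1, Y2)
        apply hF2 (a d1)
        rw [← hY1, ← hY2]
      · -- (Y1, Z2)
        apply hs1 (S (a e1))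
        rw [hZ2.1, hY1, ← sc_two, ← sc_neg_one]
        exact scz S (a d1) 2 (-1)
      · -- (Y1, X2)
        have c1 : S.SameCycle d1 e1 := ⟨1, by simp [hX2]⟩
        have c2 : S.SameCycle (a d1) (a e1) := ⟨1, by simp [hY1.symm]⟩
        rcases orbit_of_sq a d1 e1 (hainv d1) (hs2 d1 e1 c1 c2) with h | h
        · exact he1d h
        · exact hd1.2 (h ▸ he1.1)
      · -- (Z1, Y2)
        apply hs1 (S (a d1))
        rw [hZ1.1, hY2, ← sc_two, ← sc_neg_one]
        exact scz S (a e1) 2 (-1)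
      · -- (Z1, Z2)
        have hx : a (S⁻¹ d1) = S e1 := by rw [← hZ1.2, hainv]
        have c1 : S.SameCycle (S d1) (S⁻¹ d1) := by
          rw [← sc_one, ← sc_neg_one]
          exact scz S d1 1 (-1)
        have c2 : S.SameCycle (a (S d1)) (a (S⁻¹ d1)) := by
          rw [hZ2.2, hx, ← sc_neg_one, ← sc_one]
          exact scz S e1 (-1) 1
        rcases orbit_of_sq a (S d1) (S⁻¹ d1) (hainv _) (hs2 _ _ c1 c2) with h | h
        · apply hF2 d1
          rw [← h]
          simp
        · rw [hZ2.2] at h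
          exact he1d (S⁻¹.injective h).symm
      · -- (Z1, X2)
        apply hs1 (S e1)
        rw [hZ1.2, ← hX2, ← sc_two, ← sc_neg_one]
        exact scz S d1 2 (-1)
      · -- (X1, Y2)
        have c1 : S.SameCycle d1 e1 := ⟨-1, by rw [sc_neg_one, ← hX1, Equiv.Perm.inv_def, Equiv.symm_apply_apply]⟩
        have c2 : S.SameCycle (a d1) (a e1) := ⟨-1, by rw [sc_neg_one, hY2, Equiv.Perm.inv_def, Equiv.symm_apply_apply]⟩
        rcases orbit_of_sq a d1 e1 (hainv d1) (hs2 d1 e1 c1 c2) with h | h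
        · exact he1d h
        · exact hd1.2 (h ▸ he1.1)
      · -- (X1, Z2)
        apply hs1 (S d1)
        rw [hZ2.2, ← hX1, ← sc_two, ← sc_neg_one]
        exact scz S e1 2 (-1)
      · -- (X1, X2)
        apply hF2 d1
        rw [hX2, hX1]
  -- conclude
  have hclosedA : ∀ x ∈ A, a x ∈ A := by
    intro x hx
    by_contra hax
    have : x ∈ C := ⟨hx, hax⟩
    rw [hCempty] at this
    exact this
  have hainvA : ∀ x ∈ A, a⁻¹ x ∈ A := by
    intro x hx
    have : a⁻¹ x = a x := by
      conv_rhs => rw [show x = a (a⁻¹ x) from (a.apply_symm_apply x).symm, hainv]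
    rw [this]
    exact hclosedA x hx
  intro x
  obtain ⟨g, hg, hgx⟩ := M.connected d x
  let K : Subgroup (Equiv.Perm M.D) :=
    { carrier := {g | ∀ y ∈ A, g y ∈ A ∧ g⁻¹ y ∈ A}
      one_mem' := by
        intro y hy
        refine ⟨?_, ?_⟩ <;> simpa using hy
      mul_mem' := by
        intro p q hp hq y hy
        constructor
        · rw [Equiv.Perm.mul_apply]
          exact (hp _ ((hq y hy).1)).1
        · rw [mul_inv_rev, Equiv.Perm.mul_apply]
          exact (hq _ ((hp y hy).2)).2
      inv_mem' := by
        intro p hp y hy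
        refine ⟨(hp y hy).2, ?_⟩
        rw [inv_inv]
        exact (hp y hy).1 }
  have hKgen : ({M.σ, M.α} : Set (Equiv.Perm M.D)) ⊆ K := by
    rintro g (rfl | rfl)
    · intro y hy; exact ⟨hstepS y hy, hstepSinv y hy⟩
    · intro y hy; exact ⟨hclosedA y hy, hainvA y hy⟩
  have hgK : g ∈ K := (Subgroup.closure_le K).2 hKgen hg
  have := (hgK d hmemd).1
  rwa [hgx] at this
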